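/- Let Φ be the standard normal cdf, ν > 0, ε ∈ (0,1), and define f(x) := √ν·Φ^{-1}(x) − Φ^{-1}(x−ε) on (ε,1). Then f diverges to +∞ as x → ε⁺ and as x → 1⁻, f attains its minimum at some interior point y ∈ (ε,1), and at this point the stationarity condition (Φ^{-1}(y))² + ln ν = (Φ^{-1}(y−ε))² holds. -/

import Mathlib

open Filter Set

/-- Density of the normal distribution with mean `μ` and variance `v`. -/
noncomputable def gaussDensity (μ v x : ℝ) : ℝ :=
  (Real.sqrt (2 * Real.pi * v))⁻¹ * Real.exp (-((x - μ) ^ 2) / (2 * v))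

/-- Standard normal cumulative distribution function `Φ`. -/
noncomputable def stdPhi (x : ℝ) : ℝ := ∫ t in Set.Iic x, gaussDensity 0 1 t

/-- Inverse of the standard normal cdf. -/
noncomputable def stdPhiInv (p : ℝ) : ℝ := sInf {x : ℝ | p ≤ stdPhi x}


open MeasureTheory ProbabilityTheory Real Topology

lemma gaussDensity_eq : gaussDensity 0 1 = gaussianPDFReal 0 1 := by
  ext x
  simp [gaussDensity, gaussianPDFReal, neg_div]

lemma gaussDensity_pos (x : ℝ) : 0 < gaussDensity 0 1 x := by
  rw [gaussDensity_eq]; exact gaussianPDFReal_pos 0 1 x one_ne_zero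

lemma gaussDensity_cont : Continuous (gaussDensity 0 1) := by
  unfold gaussDensity; fun_prop

lemma gaussDensity_integrable : Integrable (gaussDensity 0 1) := by
  rw [gaussDensity_eq]; exact integrable_gaussianPDFReal 0 1

lemma gaussDensity_integral : ∫ x, gaussDensity 0 1 x = 1 := by
  rw [gaussDensity_eq]; exact integral_gaussianPDFReal_eq_one 0 one_ne_zero

lemma stdPhi_hasDerivAt (x : ℝ) : HasDerivAt stdPhi (gaussDensity 0 1 x) x := by
  have heq : stdPhi = fun u => (∫ t in (0:ℝ)..u, gaussDensity 0 1 t) + stdPhi 0 := by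
    funext u
    rw [← intervalIntegral.integral_Iic_sub_Iic (gaussDensity_integrable.integrableOn)
      (gaussDensity_integrable.integrableOn)]
    simp [stdPhi]
  have h : HasDerivAt (fun u => ∫ t in (0:ℝ)..u, gaussDensity 0 1 t) (gaussDensity 0 1 x) x :=
    intervalIntegral.integral_hasDerivAt_right
      (gaussDensity_integrable.intervalIntegrable)
      (gaussDensity_cont.aestronglyMeasurable.stronglyMeasurableAtFilter)
      gaussDensity_cont.continuousAt
  rw [heq]
  exact h.add_const _

lemma stdPhi_continuous : Continuous stdPhi :=
  continuous_iff_continuousAt.2 fun x => (stdPhi_hasDerivAt x).continuousAt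

lemma stdPhi_strictMono : StrictMono stdPhi :=
  strictMono_of_deriv_pos fun x => by
    rw [(stdPhi_hasDerivAt x).deriv]; exact gaussDensity_pos x

lemma stdPhi_mem_Ioo (x : ℝ) : stdPhi x ∈ Ioo (0:ℝ) 1 := by
  constructor
  · have h1 : (0:ℝ) ≤ stdPhi (x - 1) :=
      setIntegral_nonneg measurableSet_Iic fun t _ => (gaussDensity_pos t).le
    have h2 : stdPhi (x - 1) < stdPhi x := stdPhi_strictMono (by linarith)
    linarith
  · have h1 : stdPhi (x + 1) ≤ 1 := by
      rw [← gaussDensity_integral]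
      exact setIntegral_le_integral gaussDensity_integrable
        (ae_of_all _ fun t => (gaussDensity_pos t).le)
    have h2 : stdPhi x < stdPhi (x + 1) := stdPhi_strictMono (by linarith)
    linarith

lemma stdPhi_tendsto_atTop : Tendsto stdPhi atTop (𝓝 1) := by
  have := (MeasureTheory.aecover_Iic (tendsto_id (α := ℝ))
    (μ := volume)).integral_tendsto_of_countably_generated gaussDensity_integrable
  rwa [gaussDensity_integral] at this

lemma stdPhi_tendsto_atBot : Tendsto stdPhi atBot (𝓝 0) := by
  have h := (MeasureTheory.aecover_Ioi (tendsto_id (α := ℝ))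
    (μ := volume) (l := atBot)).integral_tendsto_of_countably_generated gaussDensity_integrable
  rw [gaussDensity_integral] at h
  have heq : ∀ x : ℝ, stdPhi x = 1 - ∫ t in Ioi x, gaussDensity 0 1 t := by
    intro x
    have := intervalIntegral.integral_Iic_add_Ioi (μ := volume) (b := x)
      (gaussDensity_integrable.integrableOn) (gaussDensity_integrable.integrableOn)
    rw [gaussDensity_integral] at this
    simp only [stdPhi]
    linarith
  rw [show stdPhi = fun x : ℝ => 1 - ∫ t in Ioi x, gaussDensity 0 1 t from funext heq]
  have : Tendsto (fun x : ℝ => 1 - ∫ t in Ioi x, gaussDensity 0 1 t) atBot (𝓝 (1 - 1)) :=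
    (tendsto_const_nhds).sub h
  simpa using this

lemma stdPhiInv_stdPhi (x : ℝ) : stdPhiInv (stdPhi x) = x := by
  have : {y : ℝ | stdPhi x ≤ stdPhi y} = Ici x := by
    ext y; simp [stdPhi_strictMono.le_iff_le]
  rw [stdPhiInv, this, csInf_Ici]

lemma stdPhi_surj {p : ℝ} (hp : p ∈ Ioo (0:ℝ) 1) : ∃ x, stdPhi x = p := by
  obtain ⟨a, ha⟩ := (stdPhi_tendsto_atBot.eventually_lt_const hp.1).exists
  obtain ⟨b, hb⟩ := (stdPhi_tendsto_atTop.eventually_const_lt hp.2).exists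
  have hab : a ≤ b := by
    by_contra h
    exact absurd (stdPhi_strictMono (not_le.1 h)) (by linarith [ha, hb])
  obtain ⟨x, _, hx⟩ := intermediate_value_Icc hab stdPhi_continuous.continuousOn
    ⟨ha.le, hb.le⟩
  exact ⟨x, hx⟩

lemma stdPhi_stdPhiInv {p : ℝ} (hp : p ∈ Ioo (0:ℝ) 1) : stdPhi (stdPhiInv p) = p := by
  obtain ⟨x, hx⟩ := stdPhi_surj hp
  rw [← hx, stdPhiInv_stdPhi]

lemma stdPhiInv_strictMonoOn : StrictMonoOn stdPhiInv (Ioo (0:ℝ) 1) := by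
  intro p hp q hq hpq
  have h : stdPhi (stdPhiInv p) < stdPhi (stdPhiInv q) := by
    rw [stdPhi_stdPhiInv hp, stdPhi_stdPhiInv hq]; exact hpq
  exact stdPhi_strictMono.lt_iff_lt.1 h

lemma stdPhiInv_image : stdPhiInv '' (Ioo (0:ℝ) 1) = univ := by
  apply eq_univ_of_forall
  intro x
  exact ⟨stdPhi x, stdPhi_mem_Ioo x, stdPhiInv_stdPhi x⟩

lemma stdPhiInv_continuousAt {p : ℝ} (hp : p ∈ Ioo (0:ℝ) 1) : ContinuousAt stdPhiInv p :=
  stdPhiInv_strictMonoOn.continuousAt_of_image_mem_nhds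
    (isOpen_Ioo.mem_nhds hp) (by rw [stdPhiInv_image]; exact univ_mem)

lemma stdPhiInv_tendsto_zero : Tendsto stdPhiInv (𝓝[>] (0:ℝ)) atBot := by
  rw [tendsto_atBot]
  intro M
  have hM := stdPhi_mem_Ioo M
  filter_upwards [Ioo_mem_nhdsGT_of_mem (α := ℝ) (by exact ⟨le_refl 0, hM.1⟩)] with p hp
  have : stdPhiInv p < stdPhiInv (stdPhi M) :=
    stdPhiInv_strictMonoOn ⟨hp.1, hp.2.trans hM.2⟩ (stdPhi_mem_Ioo M) hp.2
  rw [stdPhiInv_stdPhi] at this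
  exact this.le

lemma stdPhiInv_tendsto_one : Tendsto stdPhiInv (𝓝[<] (1:ℝ)) atTop := by
  rw [tendsto_atTop]
  intro M
  have hM := stdPhi_mem_Ioo M
  filter_upwards [Ioo_mem_nhdsLT_of_mem (α := ℝ) (by exact ⟨hM.2, le_refl 1⟩)] with p hp
  have : stdPhiInv (stdPhi M) < stdPhiInv p :=
    stdPhiInv_strictMonoOn (stdPhi_mem_Ioo M) ⟨hM.1.trans hp.1, hp.2⟩ hp.1
  rw [stdPhiInv_stdPhi] at this
  exact this.le

lemma stdPhiInv_hasDerivAt {p : ℝ} (hp : p ∈ Ioo (0:ℝ) 1) :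
    HasDerivAt stdPhiInv (gaussDensity 0 1 (stdPhiInv p))⁻¹ p := by
  apply HasDerivAt.of_local_left_inverse (stdPhiInv_continuousAt hp)
    (stdPhi_hasDerivAt (stdPhiInv p)) (gaussDensity_pos _).ne'
  filter_upwards [isOpen_Ioo.mem_nhds hp] with q hq
  exact stdPhi_stdPhiInv hq

/-- The function `f(x) = √ν·Φ⁻¹(x) − Φ⁻¹(x−ε)` on `(ε,1)` diverges to `+∞` at both
endpoints, attains its minimum at an interior point `y`, and at this point the
stationarity condition `(Φ⁻¹(y))² + ln ν = (Φ⁻¹(y−ε))²` holds. -/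
theorem sesqui_variational_min (ν ε : ℝ) (hν : 0 < ν) (hε : ε ∈ Set.Ioo (0 : ℝ) 1) :
    let f : ℝ → ℝ := fun x => Real.sqrt ν * stdPhiInv x - stdPhiInv (x - ε)
    Tendsto f (nhdsWithin ε (Set.Ioi ε)) atTop ∧
    Tendsto f (nhdsWithin 1 (Set.Iio 1)) atTop ∧
    ∃ y ∈ Set.Ioo ε 1, (∀ x ∈ Set.Ioo ε 1, f y ≤ f x) ∧
      (stdPhiInv y) ^ 2 + Real.log ν = (stdPhiInv (y - ε)) ^ 2 := by
  intro f
  obtain ⟨hε0, hε1⟩ := hε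
  -- continuity of f on Ioo ε 1
  have hfc : ∀ x ∈ Ioo ε 1, ContinuousAt f x := by
    intro x hx
    have hx01 : x ∈ Ioo (0:ℝ) 1 := ⟨hε0.trans hx.1, hx.2⟩
    have hxε : x - ε ∈ Ioo (0:ℝ) 1 := ⟨by linarith [hx.1], by linarith [hx.2]⟩
    have hshift : ContinuousAt (fun x : ℝ => x - ε) x := (continuous_sub_right ε).continuousAt
    have h2 : ContinuousAt (fun x : ℝ => stdPhiInv (x - ε)) x :=
      ContinuousAt.comp (x := x) (g := stdPhiInv) (f := fun x : ℝ => x - ε)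
        (stdPhiInv_continuousAt hxε) hshift
    exact (continuousAt_const.mul (stdPhiInv_continuousAt hx01)).sub h2
  -- the shift map
  have hsub : Tendsto (fun x : ℝ => x - ε) (𝓝[>] ε) (𝓝[>] (0:ℝ)) := by
    rw [tendsto_nhdsWithin_iff]
    constructor
    · have : Tendsto (fun x : ℝ => x - ε) (𝓝 ε) (𝓝 (ε - ε)) :=
        (continuous_id.sub continuous_const).tendsto ε
      simpa using this.mono_left nhdsWithin_le_nhds
    · filter_upwards [self_mem_nhdsWithin] with x hx
      exact sub_pos.2 (mem_Ioi.1 hx)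
  -- limit at ε⁺
  have h1 : Tendsto f (𝓝[>] ε) atTop := by
    have hlhs : Tendsto (fun x => Real.sqrt ν * stdPhiInv x) (𝓝[>] ε)
        (𝓝 (Real.sqrt ν * stdPhiInv ε)) :=
      (continuousAt_const.mul (stdPhiInv_continuousAt ⟨hε0, hε1⟩)).tendsto.mono_left
        nhdsWithin_le_nhds
    have hrhs : Tendsto (fun x => -stdPhiInv (x - ε)) (𝓝[>] ε) atTop :=
      tendsto_neg_atBot_atTop.comp (stdPhiInv_tendsto_zero.comp hsub)
    have hev : ∀ᶠ x in 𝓝[>] ε,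
        Real.sqrt ν * stdPhiInv ε - 1 ≤ Real.sqrt ν * stdPhiInv x :=
      (hlhs.eventually_const_lt (by linarith)).mono fun x hx => hx.le
    have := tendsto_atTop_add_left_of_le' (𝓝[>] ε) (Real.sqrt ν * stdPhiInv ε - 1) hev hrhs
    simpa [f, sub_eq_add_neg] using this
  -- limit at 1⁻
  have hsub1 : Tendsto (fun x : ℝ => x - ε) (𝓝[<] (1:ℝ)) (𝓝 (1 - ε)) :=
    ((continuous_id.sub continuous_const).tendsto 1).mono_left nhdsWithin_le_nhds
  have h2 : Tendsto f (𝓝[<] (1:ℝ)) atTop := by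
    have hlhs : Tendsto (fun x => Real.sqrt ν * stdPhiInv x) (𝓝[<] (1:ℝ)) atTop :=
      stdPhiInv_tendsto_one.const_mul_atTop (Real.sqrt_pos.2 hν)
    have hrhs : Tendsto (fun x => -stdPhiInv (x - ε)) (𝓝[<] (1:ℝ))
        (𝓝 (-stdPhiInv (1 - ε))) := by
      exact (((stdPhiInv_continuousAt (⟨by linarith, by linarith⟩ : (1:ℝ) - ε ∈ Ioo (0:ℝ) 1)).tendsto).comp
        hsub1).neg
    have hev : ∀ᶠ x in 𝓝[<] (1:ℝ),
        -stdPhiInv (1 - ε) - 1 ≤ -stdPhiInv (x - ε) :=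
      (hrhs.eventually_const_lt (by linarith)).mono fun x hx => hx.le
    have := tendsto_atTop_add_right_of_le' (𝓝[<] (1:ℝ)) (-stdPhiInv (1 - ε) - 1) hlhs hev
    simpa [f, sub_eq_add_neg] using this
  refine ⟨h1, h2, ?_⟩
  -- existence of minimum
  set x₀ : ℝ := (ε + 1) / 2 with hx₀def
  have hx₀ : x₀ ∈ Ioo ε 1 := ⟨by simp only [hx₀def]; linarith, by simp only [hx₀def]; linarith⟩
  obtain ⟨a', ha'ε, ha'⟩ := mem_nhdsGT_iff_exists_Ioo_subset.1
    (h1.eventually_gt_atTop (f x₀) : ∀ᶠ x in 𝓝[>] ε, f x₀ < f x)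
  obtain ⟨b', hb'1, hb'⟩ := mem_nhdsLT_iff_exists_Ioo_subset.1
    (h2.eventually_gt_atTop (f x₀) : ∀ᶠ x in 𝓝[<] (1:ℝ), f x₀ < f x)
  set lo : ℝ := (ε + min a' x₀) / 2 with hlodef
  set hi : ℝ := (max b' x₀ + 1) / 2 with hhidef
  have hεa' : ε < a' := ha'ε
  have hb'lt : b' < 1 := hb'1
  have hεlo : ε < lo := by
    have : ε < min a' x₀ := lt_min hεa' hx₀.1
    simp only [hlodef]; linarith
  have hlomin : lo < min a' x₀ := by
    have : ε < min a' x₀ := lt_min hεa' hx₀.1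
    simp only [hlodef]; linarith
  have hlox₀ : lo ≤ x₀ := (hlomin.le.trans (min_le_right _ _))
  have hmaxhi : max b' x₀ < hi := by
    have : max b' x₀ < 1 := max_lt hb'lt hx₀.2
    simp only [hhidef]; linarith
  have hhi1 : hi < 1 := by
    have : max b' x₀ < 1 := max_lt hb'lt hx₀.2
    simp only [hhidef]; linarith
  have hx₀hi : x₀ ≤ hi := (le_max_right b' x₀).trans hmaxhi.le
  have hsubset : Icc lo hi ⊆ Ioo ε 1 := fun x hx =>
    ⟨hεlo.trans_le hx.1, hx.2.trans_lt hhi1⟩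
  have hfcont : ContinuousOn f (Icc lo hi) := fun x hx =>
    (hfc x (hsubset hx)).continuousWithinAt
  obtain ⟨y, hyIcc, hymin⟩ := isCompact_Icc.exists_isMinOn ⟨x₀, hlox₀, hx₀hi⟩ hfcont
  have hyIoo : y ∈ Ioo ε 1 := hsubset hyIcc
  have hyx₀ : f y ≤ f x₀ := hymin ⟨hlox₀, hx₀hi⟩
  have hglobal : ∀ x ∈ Ioo ε 1, f y ≤ f x := by
    intro x hx
    rcases lt_or_ge x lo with hxlo | hxlo
    · have : x ∈ Ioo ε a' := ⟨hx.1, (hxlo.trans hlomin).trans_le (min_le_left _ _)⟩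
      exact hyx₀.trans (ha' this).le
    · rcases le_or_gt x hi with hxhi | hxhi
      · exact hymin ⟨hxlo, hxhi⟩
      · have : x ∈ Ioo b' 1 := ⟨((le_max_left b' x₀).trans_lt hmaxhi).trans hxhi, hx.2⟩
        exact hyx₀.trans (hb' this).le
  refine ⟨y, hyIoo, hglobal, ?_⟩
  -- stationarity
  have hy01 : y ∈ Ioo (0:ℝ) 1 := ⟨hε0.trans hyIoo.1, hyIoo.2⟩
  have hyε01 : y - ε ∈ Ioo (0:ℝ) 1 := ⟨by linarith [hyIoo.1], by linarith [hyIoo.2]⟩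
  set a : ℝ := stdPhiInv y
  set b : ℝ := stdPhiInv (y - ε)
  have hda : HasDerivAt stdPhiInv (gaussDensity 0 1 a)⁻¹ y := stdPhiInv_hasDerivAt hy01
  have hdb' : HasDerivAt stdPhiInv (gaussDensity 0 1 b)⁻¹ (y - ε) := stdPhiInv_hasDerivAt hyε01
  have hshift : HasDerivAt (fun x : ℝ => x - ε) 1 y := (hasDerivAt_id y).sub_const ε
  have hdb : HasDerivAt (fun x : ℝ => stdPhiInv (x - ε)) (gaussDensity 0 1 b)⁻¹ y := by
    have := hdb'.comp y hshift
    simpa [Function.comp_def] using this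
  have hdf : HasDerivAt f (Real.sqrt ν * (gaussDensity 0 1 a)⁻¹ - (gaussDensity 0 1 b)⁻¹) y :=
    (hda.const_mul (Real.sqrt ν)).sub hdb
  have hlocal : IsLocalMin f y := by
    filter_upwards [isOpen_Ioo.mem_nhds hyIoo] with x hx using hglobal x hx
  have h0 := hlocal.hasDerivAt_eq_zero hdf
  have hga := gaussDensity_pos a
  have hgb := gaussDensity_pos b
  have hsν : (0:ℝ) < Real.sqrt ν := Real.sqrt_pos.2 hν
  have key : Real.sqrt ν * gaussDensity 0 1 b = gaussDensity 0 1 a := by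
    have h0' : Real.sqrt ν * (gaussDensity 0 1 a)⁻¹ = (gaussDensity 0 1 b)⁻¹ :=
      sub_eq_zero.1 h0
    field_simp at h0'
    linarith
  have hexp : Real.sqrt ν * Real.exp (-((b - 0) ^ 2) / (2 * 1)) =
      Real.exp (-((a - 0) ^ 2) / (2 * 1)) := by
    have hc : (0:ℝ) < Real.sqrt (2 * Real.pi * 1) := Real.sqrt_pos.2 (by positivity)
    simp only [gaussDensity] at key
    have key' : (Real.sqrt (2 * Real.pi * 1))⁻¹ *
        (Real.sqrt ν * Real.exp (-((b - 0) ^ 2) / (2 * 1))) =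
        (Real.sqrt (2 * Real.pi * 1))⁻¹ * Real.exp (-((a - 0) ^ 2) / (2 * 1)) := by
      rw [← key]; ring
    exact mul_left_cancel₀ (inv_ne_zero hc.ne') key'
  have hlog := congrArg Real.log hexp
  rw [Real.log_mul hsν.ne' (Real.exp_ne_zero _), Real.log_exp, Real.log_exp,
    Real.log_sqrt hν.le] at hlog
  have : Real.log ν / 2 + -b ^ 2 / 2 = -a ^ 2 / 2 := by
    simpa using hlog
  linarith
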